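/- Let B₁, B₂ be bounded Borel sets in ℝ² and let q₁, q₂ be coprime positive integers. For a bounded Borel set B ⊂ ℝ², let N_B(x) = |(ℤ² + x) ∩ B|. Then ∫_{[0,1)²} N_{B₁}(q₁x)·N_{B₂}(q₂x) dx ≤ |ℤ² ∩ (q₂B₁ − q₁B₂)| · min(Vol₂(B₁)/q₁², Vol₂(B₂)/q₂²). -/

import Mathlib

open MeasureTheory Set ENNReal

private lemma int_mem_Icc_of_abs_le {z : ℤ} {C : ℝ} (h : |(z : ℝ)| ≤ C) :
    z ∈ Finset.Icc (-⌈C⌉) ⌈C⌉ := by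
  rw [abs_le] at h
  rw [Finset.mem_Icc]
  constructor
  · have : -(⌈C⌉ : ℝ) ≤ (z : ℝ) := le_trans (neg_le_neg (Int.le_ceil C)) h.1
    exact_mod_cast this
  · have : (z : ℝ) ≤ (⌈C⌉ : ℝ) := le_trans h.2 (Int.le_ceil C)
    exact_mod_cast this

private lemma card_subtype_eq_filter {α : Type*} (P : α → Prop) [DecidablePred P]
    (F : Finset α) (h : ∀ a, P a → a ∈ F) :
    Nat.card {a // P a} = (F.filter P).card := by
  have h1 : Nat.card {a // P a} = ({a | P a} : Set α).ncard := Nat.card_coe_set_eq _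
  have h2 : ({a | P a} : Set α) = ↑(F.filter P) := by
    ext a; simp only [Finset.coe_filter, mem_setOf_eq]
    exact ⟨fun hp => ⟨h a hp, hp⟩, fun hp => hp.2⟩
  rw [h1, h2, Set.ncard_coe_finset]

private lemma sum_boole_indicator {α M : Type*} [NonAssocSemiring M] (F : Finset α)
    (T : Set (ℝ × ℝ)) (g : α → ℝ × ℝ) [DecidablePred fun a => g a ∈ T] :
    (∑ a ∈ F, T.indicator (1 : ℝ × ℝ → M) (g a))
      = ((F.filter fun a => g a ∈ T).card : M) := by
  rw [← Finset.sum_boole]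
  exact Finset.sum_congr rfl fun a _ => by simp [Set.indicator_apply]

private lemma tiling_bound (A : Set (ℝ × ℝ)) (hA : MeasurableSet A) (q : ℕ) (hq : 0 < q)
    (c : ℝ × ℝ) :
    ∑' s : ℤ × ℤ, ∫⁻ x in Set.Ico (0:ℝ) 1 ×ˢ Set.Ico (0:ℝ) 1,
        A.indicator (1 : ℝ × ℝ → ℝ≥0∞) (c.1 + q * s.1 + q * x.1, c.2 + q * s.2 + q * x.2)
      ≤ volume A / (q : ℝ≥0∞) ^ 2 := by
  classical
  have hq' : (0:ℝ) < q := by exact_mod_cast hq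
  set Q : Set (ℝ × ℝ) := Set.Ico (0:ℝ) 1 ×ˢ Set.Ico (0:ℝ) 1 with hQdef
  set D : ℤ × ℤ → Set (ℝ × ℝ) := fun s =>
    Set.Ico (c.1 + q * s.1) (c.1 + q * s.1 + q) ×ˢ Set.Ico (c.2 + q * s.2) (c.2 + q * s.2 + q)
    with hDdef
  have hDmeas : ∀ s, MeasurableSet (D s) := fun s =>
    (measurableSet_Ico).prod measurableSet_Ico
  have key : ∀ s : ℤ × ℤ,
      (∫⁻ x in Q, A.indicator (1 : ℝ × ℝ → ℝ≥0∞)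
        (c.1 + q * s.1 + q * x.1, c.2 + q * s.2 + q * x.2))
      = ((q : ℝ≥0∞) ^ 2)⁻¹ * volume (A ∩ D s) := by
    intro s
    set v : ℝ × ℝ := (c.1 + q * s.1, c.2 + q * s.2) with hvdef
    set T : ℝ × ℝ → ℝ × ℝ := fun x => v + (q : ℝ) • x with hTdef
    have hTx : ∀ x : ℝ × ℝ,
        (c.1 + q * s.1 + q * x.1, c.2 + q * s.2 + q * x.2) = T x := by
      intro x
      simp only [hTdef, hvdef, Prod.mk_add_mk, Prod.smul_mk, smul_eq_mul, Prod.ext_iff,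
        Prod.fst_add, Prod.snd_add, Prod.smul_fst, Prod.smul_snd]
      constructor <;> trivial
    have hTmeas : Measurable T := by
      apply Measurable.add measurable_const
      exact (continuous_const_smul _).measurable
    have hQT : ∀ x : ℝ × ℝ, x ∈ Q ↔ T x ∈ D s := by
      intro x
      simp only [hQdef, hDdef, hTdef, hvdef, Set.mem_prod, Set.mem_Ico, Prod.fst_add,
        Prod.snd_add, Prod.smul_fst, Prod.smul_snd, smul_eq_mul]
      constructor
      · rintro ⟨⟨h1, h2⟩, h3, h4⟩
        refine ⟨⟨by nlinarith, by nlinarith⟩, by nlinarith, by nlinarith⟩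
      · rintro ⟨⟨h1, h2⟩, h3, h4⟩
        have e1 : 0 ≤ (q:ℝ) * x.1 := by linarith
        have e2 : (q:ℝ) * x.1 < q * 1 := by linarith
        have e3 : 0 ≤ (q:ℝ) * x.2 := by linarith
        have e4 : (q:ℝ) * x.2 < q * 1 := by linarith
        exact ⟨⟨nonneg_of_mul_nonneg_right e1 hq', lt_of_mul_lt_mul_left (by linarith) hq'.le⟩,
          nonneg_of_mul_nonneg_right e3 hq', lt_of_mul_lt_mul_left (by linarith) hq'.le⟩
    have h1 : (∫⁻ x in Q, A.indicator (1 : ℝ × ℝ → ℝ≥0∞)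
        (c.1 + q * s.1 + q * x.1, c.2 + q * s.2 + q * x.2))
        = ∫⁻ x in Q, (T ⁻¹' (A ∩ D s)).indicator (1 : ℝ × ℝ → ℝ≥0∞) x := by
      apply lintegral_congr_ae
      apply Filter.eventually_of_mem (self_mem_ae_restrict
        ((measurableSet_Ico.prod measurableSet_Ico)))
      intro x hx
      show A.indicator (1 : ℝ × ℝ → ℝ≥0∞)
        (c.1 + q * s.1 + q * x.1, c.2 + q * s.2 + q * x.2) = _
      rw [hTx x]
      simp only [Set.indicator_apply, Set.mem_preimage, Set.mem_inter_iff]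
      by_cases hTA : T x ∈ A
      · simp [hTA, (hQT x).1 hx]
      · simp [hTA]
    rw [h1, lintegral_indicator_one (hTmeas (hA.inter (hDmeas s))),
      Measure.restrict_apply (hTmeas (hA.inter (hDmeas s)))]
    have h2 : T ⁻¹' (A ∩ D s) ∩ Q = T ⁻¹' (A ∩ D s) := by
      apply Set.inter_eq_self_of_subset_left
      intro x hx
      exact (hQT x).2 (Set.mem_of_mem_inter_right hx)
    rw [h2]
    have h3 : T ⁻¹' (A ∩ D s) = ((q:ℝ) • ·) ⁻¹' ((v + ·) ⁻¹' (A ∩ D s)) := rfl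
    rw [h3, Measure.addHaar_preimage_smul volume (ne_of_gt hq'), measure_preimage_add]
    congr 1
    have hfr : Module.finrank ℝ (ℝ × ℝ) = 2 := by simp
    rw [hfr, abs_of_nonneg (by positivity), ENNReal.ofReal_inv_of_pos (by positivity),
      ENNReal.ofReal_pow (by positivity)]
    simp
  have hdisj : Pairwise (Function.onFun Disjoint fun s => A ∩ D s) := by
    intro s t hst
    apply Set.disjoint_left.2
    rintro x ⟨-, hxs⟩ ⟨-, hxt⟩
    simp only [hDdef, Set.mem_prod, Set.mem_Ico] at hxs hxt
    obtain ⟨⟨a1, a2⟩, a3, a4⟩ := hxs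
    obtain ⟨⟨b1, b2⟩, b3, b4⟩ := hxt
    apply hst
    have e1 : s.1 = t.1 := by
      have l1 : (q:ℝ) * s.1 < q * (t.1 + 1) := by nlinarith
      have l2 : (q:ℝ) * t.1 < q * (s.1 + 1) := by nlinarith
      have m1 : (s.1:ℝ) < (t.1:ℝ) + 1 := lt_of_mul_lt_mul_left l1 hq'.le
      have m2 : (t.1:ℝ) < (s.1:ℝ) + 1 := lt_of_mul_lt_mul_left l2 hq'.le
      have n1 : s.1 < t.1 + 1 := by exact_mod_cast m1
      have n2 : t.1 < s.1 + 1 := by exact_mod_cast m2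
      omega
    have e2 : s.2 = t.2 := by
      have l1 : (q:ℝ) * s.2 < q * (t.2 + 1) := by nlinarith
      have l2 : (q:ℝ) * t.2 < q * (s.2 + 1) := by nlinarith
      have m1 : (s.2:ℝ) < (t.2:ℝ) + 1 := lt_of_mul_lt_mul_left l1 hq'.le
      have m2 : (t.2:ℝ) < (s.2:ℝ) + 1 := lt_of_mul_lt_mul_left l2 hq'.le
      have n1 : s.2 < t.2 + 1 := by exact_mod_cast m1
      have n2 : t.2 < s.2 + 1 := by exact_mod_cast m2
      omega
    exact Prod.ext e1 e2
  calc ∑' s : ℤ × ℤ, ∫⁻ x in Q, A.indicator (1 : ℝ × ℝ → ℝ≥0∞)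
        (c.1 + q * s.1 + q * x.1, c.2 + q * s.2 + q * x.2)
      = ∑' s : ℤ × ℤ, ((q : ℝ≥0∞) ^ 2)⁻¹ * volume (A ∩ D s) := tsum_congr key
    _ = ((q : ℝ≥0∞) ^ 2)⁻¹ * ∑' s : ℤ × ℤ, volume (A ∩ D s) := ENNReal.tsum_mul_left
    _ ≤ ((q : ℝ≥0∞) ^ 2)⁻¹ * volume A := by
        gcongr
        rw [← measure_iUnion hdisj (fun s => hA.inter (hDmeas s))]
        exact measure_mono (Set.iUnion_subset fun s => Set.inter_subset_left)
    _ = volume A / (q : ℝ≥0∞) ^ 2 := (ENNReal.div_eq_inv_mul).symm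

private lemma indicator_le_one' (T : Set (ℝ × ℝ)) (y : ℝ × ℝ) :
    T.indicator (1 : ℝ × ℝ → ℝ≥0∞) y ≤ 1 := by
  classical
  rw [Set.indicator_apply]; split <;> simp

private def pairEquiv (q₁ q₂ aa bb : ℤ) (hab : bb * q₁ + aa * q₂ = 1) :
    ((ℤ × ℤ) × (ℤ × ℤ)) ≃ ((ℤ × ℤ) × (ℤ × ℤ)) where
  toFun z := ((aa * z.1.1 + q₁ * z.2.1, aa * z.1.2 + q₁ * z.2.2),
    (-bb * z.1.1 + q₂ * z.2.1, -bb * z.1.2 + q₂ * z.2.2))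
  invFun w := ((q₂ * w.1.1 - q₁ * w.2.1, q₂ * w.1.2 - q₁ * w.2.2),
    (bb * w.1.1 + aa * w.2.1, bb * w.1.2 + aa * w.2.2))
  left_inv := by
    rintro ⟨⟨k1, k2⟩, s1, s2⟩
    simp only [Prod.mk.injEq]
    refine ⟨⟨?_, ?_⟩, ?_, ?_⟩
    · linear_combination k1 * hab
    · linear_combination k2 * hab
    · linear_combination s1 * hab
    · linear_combination s2 * hab
  right_inv := by
    rintro ⟨⟨p1, p2⟩, r1, r2⟩
    simp only [Prod.mk.injEq]
    refine ⟨⟨?_, ?_⟩, ?_, ?_⟩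
    · linear_combination p1 * hab
    · linear_combination p2 * hab
    · linear_combination r1 * hab
    · linear_combination r2 * hab

set_option maxHeartbeats 1600000 in
theorem mean_count_boxes (B₁ B₂ : Set (ℝ × ℝ))
    (hB₁m : MeasurableSet B₁) (hB₂m : MeasurableSet B₂)
    (hB₁b : Bornology.IsBounded B₁) (hB₂b : Bornology.IsBounded B₂)
    (q₁ q₂ : ℕ) (hq₁ : 0 < q₁) (hq₂ : 0 < q₂) (hco : Nat.Coprime q₁ q₂) :
    (∫ x in Set.Ico (0:ℝ) 1 ×ˢ Set.Ico (0:ℝ) 1,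
        (Nat.card {p : ℤ × ℤ // ((p.1 : ℝ) + q₁ * x.1, (p.2 : ℝ) + q₁ * x.2) ∈ B₁} : ℝ) *
        (Nat.card {p : ℤ × ℤ // ((p.1 : ℝ) + q₂ * x.1, (p.2 : ℝ) + q₂ * x.2) ∈ B₂} : ℝ))
      ≤ (Nat.card {k : ℤ × ℤ //
            ∃ u ∈ B₁, ∃ v ∈ B₂, ((k.1 : ℝ), (k.2 : ℝ)) = (q₂ : ℝ) • u - (q₁ : ℝ) • v} : ℝ) *
          min ((volume B₁).toReal / q₁ ^ 2) ((volume B₂).toReal / q₂ ^ 2) := by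
  classical
  obtain ⟨R₁, hR₁⟩ := isBounded_iff_forall_norm_le.1 hB₁b
  obtain ⟨R₂, hR₂⟩ := isBounded_iff_forall_norm_le.1 hB₂b
  set Q : Set (ℝ × ℝ) := Set.Ico (0:ℝ) 1 ×ˢ Set.Ico (0:ℝ) 1 with hQdef
  have hQmeas : MeasurableSet Q := measurableSet_Ico.prod measurableSet_Ico
  set F₁ : Finset (ℤ × ℤ) :=
    Finset.Icc (-⌈R₁ + q₁⌉) ⌈R₁ + q₁⌉ ×ˢ Finset.Icc (-⌈R₁ + q₁⌉) ⌈R₁ + q₁⌉ with hF₁def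
  set F₂ : Finset (ℤ × ℤ) :=
    Finset.Icc (-⌈R₂ + q₂⌉) ⌈R₂ + q₂⌉ ×ˢ Finset.Icc (-⌈R₂ + q₂⌉) ⌈R₂ + q₂⌉ with hF₂def
  have hmemF : ∀ (B : Set (ℝ × ℝ)) (R : ℝ) (q : ℕ), (∀ y ∈ B, ‖y‖ ≤ R) →
      ∀ x ∈ Q, ∀ p : ℤ × ℤ, ((p.1 : ℝ) + q * x.1, (p.2 : ℝ) + q * x.2) ∈ B →
        p ∈ (Finset.Icc (-⌈R + q⌉) ⌈R + q⌉ ×ˢ Finset.Icc (-⌈R + q⌉) ⌈R + q⌉ :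
          Finset (ℤ × ℤ)) := by
    intro B R q hR x hx p hp
    obtain ⟨⟨hx1, hx2⟩, hx3, hx4⟩ := hx
    have hq0 : (0:ℝ) ≤ q := by positivity
    have hn := hR _ hp
    have h1 : |(p.1 : ℝ) + q * x.1| ≤ R := by
      have := norm_fst_le (((p.1 : ℝ) + q * x.1, (p.2 : ℝ) + q * x.2) : ℝ × ℝ)
      rw [Real.norm_eq_abs] at this
      exact le_trans this hn
    have h2 : |(p.2 : ℝ) + q * x.2| ≤ R := by
      have := norm_snd_le (((p.1 : ℝ) + q * x.1, (p.2 : ℝ) + q * x.2) : ℝ × ℝ)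
      rw [Real.norm_eq_abs] at this
      exact le_trans this hn
    rw [Finset.mem_product]
    constructor
    · apply int_mem_Icc_of_abs_le
      rw [abs_le] at h1 ⊢
      constructor <;> nlinarith
    · apply int_mem_Icc_of_abs_le
      rw [abs_le] at h2 ⊢
      constructor <;> nlinarith
  have hF₁mem := hmemF B₁ R₁ q₁ hR₁
  have hF₂mem := hmemF B₂ R₂ q₂ hR₂
  set S : Set (ℤ × ℤ) :=
    {k | ∃ u ∈ B₁, ∃ v ∈ B₂, ((k.1 : ℝ), (k.2 : ℝ)) = (q₂ : ℝ) • u - (q₁ : ℝ) • v} with hSdef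
  have hSfin : S.Finite := by
    apply Set.Finite.subset (Finset.finite_toSet
      (Finset.Icc (-⌈q₂ * R₁ + q₁ * R₂⌉) ⌈q₂ * R₁ + q₁ * R₂⌉ ×ˢ
        Finset.Icc (-⌈q₂ * R₁ + q₁ * R₂⌉) ⌈q₂ * R₁ + q₁ * R₂⌉ : Finset (ℤ × ℤ)))
    rintro k ⟨u, hu, v, hv, hkeq⟩
    have hu1 : |u.1| ≤ R₁ := by
      have := norm_fst_le u; rw [Real.norm_eq_abs] at this; exact le_trans this (hR₁ u hu)
    have hu2 : |u.2| ≤ R₁ := by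
      have := norm_snd_le u; rw [Real.norm_eq_abs] at this; exact le_trans this (hR₁ u hu)
    have hv1 : |v.1| ≤ R₂ := by
      have := norm_fst_le v; rw [Real.norm_eq_abs] at this; exact le_trans this (hR₂ v hv)
    have hv2 : |v.2| ≤ R₂ := by
      have := norm_snd_le v; rw [Real.norm_eq_abs] at this; exact le_trans this (hR₂ v hv)
    rw [Prod.ext_iff] at hkeq
    obtain ⟨hk1, hk2⟩ := hkeq
    simp only [Prod.fst_sub, Prod.snd_sub, Prod.smul_fst, Prod.smul_snd, smul_eq_mul]
      at hk1 hk2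
    have hq20 : (0:ℝ) ≤ q₂ := by positivity
    have hq10 : (0:ℝ) ≤ q₁ := by positivity
    have habs : ∀ u1 v1 : ℝ, |u1| ≤ R₁ → |v1| ≤ R₂ →
        |(q₂:ℝ) * u1 - q₁ * v1| ≤ q₂ * R₁ + q₁ * R₂ := by
      intro u1 v1 h1 h2
      calc |(q₂:ℝ) * u1 - q₁ * v1| ≤ |(q₂:ℝ) * u1| + |(q₁:ℝ) * v1| := abs_sub _ _
        _ = q₂ * |u1| + q₁ * |v1| := by
            rw [abs_mul, abs_mul, abs_of_nonneg hq20, abs_of_nonneg hq10]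
        _ ≤ q₂ * R₁ + q₁ * R₂ := by gcongr
    rw [Finset.coe_product]
    constructor
    · exact int_mem_Icc_of_abs_le (by rw [hk1]; exact habs u.1 v.1 hu1 hv1)
    · exact int_mem_Icc_of_abs_le (by rw [hk2]; exact habs u.2 v.2 hu2 hv2)
  have hcard₁ : ∀ x ∈ Q,
      Nat.card {p : ℤ × ℤ // ((p.1 : ℝ) + q₁ * x.1, (p.2 : ℝ) + q₁ * x.2) ∈ B₁}
      = (F₁.filter fun p : ℤ × ℤ => ((p.1 : ℝ) + q₁ * x.1, (p.2 : ℝ) + q₁ * x.2) ∈ B₁).card :=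
    fun x hx => card_subtype_eq_filter _ _ (fun p hp => hF₁mem x hx p hp)
  have hcard₂ : ∀ x ∈ Q,
      Nat.card {p : ℤ × ℤ // ((p.1 : ℝ) + q₂ * x.1, (p.2 : ℝ) + q₂ * x.2) ∈ B₂}
      = (F₂.filter fun p : ℤ × ℤ => ((p.1 : ℝ) + q₂ * x.1, (p.2 : ℝ) + q₂ * x.2) ∈ B₂).card :=
    fun x hx => card_subtype_eq_filter _ _ (fun p hp => hF₂mem x hx p hp)
  set G₁ : ℝ × ℝ → ℝ≥0∞ := fun x =>
    ∑ p ∈ F₁, B₁.indicator (1 : ℝ × ℝ → ℝ≥0∞) ((p.1 : ℝ) + q₁ * x.1, (p.2 : ℝ) + q₁ * x.2)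
    with hG₁def
  set G₂ : ℝ × ℝ → ℝ≥0∞ := fun x =>
    ∑ p ∈ F₂, B₂.indicator (1 : ℝ × ℝ → ℝ≥0∞) ((p.1 : ℝ) + q₂ * x.1, (p.2 : ℝ) + q₂ * x.2)
    with hG₂def
  have hindmeas : ∀ (B : Set (ℝ × ℝ)), MeasurableSet B → ∀ (q : ℕ) (p : ℤ × ℤ),
      Measurable fun x : ℝ × ℝ =>
        B.indicator (1 : ℝ × ℝ → ℝ≥0∞) ((p.1 : ℝ) + q * x.1, (p.2 : ℝ) + q * x.2) := by
    intro B hB q p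
    exact (measurable_const.indicator hB).comp (by fun_prop)
  have hco' : IsCoprime (q₁ : ℤ) (q₂ : ℤ) := by
    rw [Int.isCoprime_iff_gcd_eq_one]; exact_mod_cast hco
  obtain ⟨bb, aa, hab⟩ := hco'
  have habR : (bb : ℝ) * q₁ + (aa : ℝ) * q₂ = 1 := by exact_mod_cast hab
  set I : (ℤ × ℤ) × (ℤ × ℤ) → ℝ≥0∞ := fun z => ∫⁻ x in Q,
      B₁.indicator (1 : ℝ × ℝ → ℝ≥0∞) ((z.1.1 : ℝ) + q₁ * x.1, (z.1.2 : ℝ) + q₁ * x.2) *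
      B₂.indicator (1 : ℝ × ℝ → ℝ≥0∞) ((z.2.1 : ℝ) + q₂ * x.1, (z.2.2 : ℝ) + q₂ * x.2)
    with hIdef
  set E := pairEquiv q₁ q₂ aa bb hab with hEdef
  set m : ℝ≥0∞ := min (volume B₁ / (q₁ : ℝ≥0∞) ^ 2) (volume B₂ / (q₂ : ℝ≥0∞) ^ 2) with hmdef
  -- bound for each k on the fiber sum
  have hTle : ∀ k : ℤ × ℤ, (∑' s : ℤ × ℤ, I (E (k, s))) ≤ m := by
    intro k
    apply le_min
    · calc (∑' s : ℤ × ℤ, I (E (k, s)))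
          ≤ ∑' s : ℤ × ℤ, ∫⁻ x in Q, B₁.indicator (1 : ℝ × ℝ → ℝ≥0∞)
              (((aa * k.1 : ℤ) : ℝ) + q₁ * s.1 + q₁ * x.1,
               ((aa * k.2 : ℤ) : ℝ) + q₁ * s.2 + q₁ * x.2) := by
            apply ENNReal.tsum_le_tsum
            intro s
            have hpt : ∀ x : ℝ × ℝ,
                (((E (k, s)).1.1 : ℝ) + q₁ * x.1, ((E (k, s)).1.2 : ℝ) + q₁ * x.2)
                = (((aa * k.1 : ℤ) : ℝ) + q₁ * s.1 + q₁ * x.1,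
                   ((aa * k.2 : ℤ) : ℝ) + q₁ * s.2 + q₁ * x.2) := by
              intro x
              have e1 : (E (k, s)).1.1 = aa * k.1 + q₁ * s.1 := rfl
              have e2 : (E (k, s)).1.2 = aa * k.2 + q₁ * s.2 := rfl
              rw [e1, e2, Prod.mk.injEq]
              constructor <;> (push_cast; ring)
            simp only [hIdef]
            apply lintegral_mono
            intro x
            simp only [hpt]
            exact mul_le_of_le_one_right' (indicator_le_one' _ _)
        _ ≤ volume B₁ / (q₁ : ℝ≥0∞) ^ 2 :=
            tiling_bound B₁ hB₁m q₁ hq₁ (((aa * k.1 : ℤ) : ℝ), ((aa * k.2 : ℤ) : ℝ))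
    · calc (∑' s : ℤ × ℤ, I (E (k, s)))
          ≤ ∑' s : ℤ × ℤ, ∫⁻ x in Q, B₂.indicator (1 : ℝ × ℝ → ℝ≥0∞)
              (((-bb * k.1 : ℤ) : ℝ) + q₂ * s.1 + q₂ * x.1,
               ((-bb * k.2 : ℤ) : ℝ) + q₂ * s.2 + q₂ * x.2) := by
            apply ENNReal.tsum_le_tsum
            intro s
            have hpt : ∀ x : ℝ × ℝ,
                (((E (k, s)).2.1 : ℝ) + q₂ * x.1, ((E (k, s)).2.2 : ℝ) + q₂ * x.2)
                = (((-bb * k.1 : ℤ) : ℝ) + q₂ * s.1 + q₂ * x.1,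
                   ((-bb * k.2 : ℤ) : ℝ) + q₂ * s.2 + q₂ * x.2) := by
              intro x
              have e1 : (E (k, s)).2.1 = -bb * k.1 + q₂ * s.1 := rfl
              have e2 : (E (k, s)).2.2 = -bb * k.2 + q₂ * s.2 := rfl
              rw [e1, e2, Prod.mk.injEq]
              constructor <;> (push_cast; ring)
            simp only [hIdef]
            apply lintegral_mono
            intro x
            simp only [hpt]
            exact mul_le_of_le_one_left' (indicator_le_one' _ _)
        _ ≤ volume B₂ / (q₂ : ℝ≥0∞) ^ 2 :=
            tiling_bound B₂ hB₂m q₂ hq₂ (((-bb * k.1 : ℤ) : ℝ), ((-bb * k.2 : ℤ) : ℝ))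
  -- vanishing off S
  have hTzero : ∀ k : ℤ × ℤ, k ∉ S → (∑' s : ℤ × ℤ, I (E (k, s))) = 0 := by
    intro k hk
    have : ∀ s : ℤ × ℤ, I (E (k, s)) = 0 := by
      intro s
      simp only [hIdef]
      have hzero : ∀ x : ℝ × ℝ,
          B₁.indicator (1 : ℝ × ℝ → ℝ≥0∞)
            (((E (k, s)).1.1 : ℝ) + q₁ * x.1, ((E (k, s)).1.2 : ℝ) + q₁ * x.2) *
          B₂.indicator (1 : ℝ × ℝ → ℝ≥0∞)
            (((E (k, s)).2.1 : ℝ) + q₂ * x.1, ((E (k, s)).2.2 : ℝ) + q₂ * x.2) = 0 := by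
        intro x
        by_cases h1 : (((E (k, s)).1.1 : ℝ) + q₁ * x.1, ((E (k, s)).1.2 : ℝ) + q₁ * x.2) ∈ B₁
        · by_cases h2 : (((E (k, s)).2.1 : ℝ) + q₂ * x.1,
              ((E (k, s)).2.2 : ℝ) + q₂ * x.2) ∈ B₂
          · exfalso
            apply hk
            refine ⟨_, h1, _, h2, ?_⟩
            have e1 : (E (k, s)).1.1 = aa * k.1 + q₁ * s.1 := rfl
            have e2 : (E (k, s)).1.2 = aa * k.2 + q₁ * s.2 := rfl
            have e3 : (E (k, s)).2.1 = -bb * k.1 + q₂ * s.1 := rfl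
            have e4 : (E (k, s)).2.2 = -bb * k.2 + q₂ * s.2 := rfl
            rw [e1, e2, e3, e4, Prod.mk.injEq]
            simp only [Prod.fst_sub, Prod.snd_sub, Prod.smul_fst, Prod.smul_snd, smul_eq_mul]
            constructor
            · push_cast
              linear_combination (-(k.1 : ℝ)) * habR
            · push_cast
              linear_combination (-(k.2 : ℝ)) * habR
          · rw [Set.indicator_of_notMem h2, mul_zero]
        · rw [Set.indicator_of_notMem h1, zero_mul]
      have h0 : (∫⁻ x in Q, B₁.indicator (1 : ℝ × ℝ → ℝ≥0∞)
              (((E (k, s)).1.1 : ℝ) + q₁ * x.1, ((E (k, s)).1.2 : ℝ) + q₁ * x.2) *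
            B₂.indicator (1 : ℝ × ℝ → ℝ≥0∞)
              (((E (k, s)).2.1 : ℝ) + q₂ * x.1, ((E (k, s)).2.2 : ℝ) + q₂ * x.2))
          = ∫⁻ _x in Q, (0 : ℝ≥0∞) := lintegral_congr fun x => hzero x
      rw [h0]
      simp
    simp [this]
  -- main chain in ℝ≥0∞
  have hchain : (∫⁻ x in Q, G₁ x * G₂ x) ≤ (Nat.card ↥S : ℝ≥0∞) * m := by
    have step1 : (∫⁻ x in Q, G₁ x * G₂ x) = ∑ z ∈ F₁ ×ˢ F₂, I z := by
      have hpt : ∀ x : ℝ × ℝ, G₁ x * G₂ x = ∑ z ∈ F₁ ×ˢ F₂,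
          B₁.indicator (1 : ℝ × ℝ → ℝ≥0∞) ((z.1.1 : ℝ) + q₁ * x.1, (z.1.2 : ℝ) + q₁ * x.2) *
          B₂.indicator (1 : ℝ × ℝ → ℝ≥0∞) ((z.2.1 : ℝ) + q₂ * x.1, (z.2.2 : ℝ) + q₂ * x.2) := by
        intro x
        rw [hG₁def, hG₂def]
        exact (Finset.sum_mul_sum F₁ F₂
            (fun p : ℤ × ℤ =>
              B₁.indicator (1 : ℝ × ℝ → ℝ≥0∞) ((p.1 : ℝ) + q₁ * x.1, (p.2 : ℝ) + q₁ * x.2))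
            (fun p : ℤ × ℤ =>
              B₂.indicator (1 : ℝ × ℝ → ℝ≥0∞) ((p.1 : ℝ) + q₂ * x.1, (p.2 : ℝ) + q₂ * x.2))).trans
          (Finset.sum_product F₁ F₂ (fun z : (ℤ × ℤ) × (ℤ × ℤ) =>
            B₁.indicator (1 : ℝ × ℝ → ℝ≥0∞) ((z.1.1 : ℝ) + q₁ * x.1, (z.1.2 : ℝ) + q₁ * x.2) *
            B₂.indicator (1 : ℝ × ℝ → ℝ≥0∞) ((z.2.1 : ℝ) + q₂ * x.1, (z.2.2 : ℝ) + q₂ * x.2))).symm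
      calc (∫⁻ x in Q, G₁ x * G₂ x)
          = ∫⁻ x in Q, ∑ z ∈ F₁ ×ˢ F₂,
            B₁.indicator (1 : ℝ × ℝ → ℝ≥0∞) ((z.1.1 : ℝ) + q₁ * x.1, (z.1.2 : ℝ) + q₁ * x.2) *
            B₂.indicator (1 : ℝ × ℝ → ℝ≥0∞) ((z.2.1 : ℝ) + q₂ * x.1, (z.2.2 : ℝ) + q₂ * x.2) :=
            lintegral_congr hpt
        _ = ∑ z ∈ F₁ ×ˢ F₂, I z :=
            lintegral_finset_sum (μ := volume.restrict Q) (s := F₁ ×ˢ F₂)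
              (f := fun (z : (ℤ × ℤ) × (ℤ × ℤ)) (x : ℝ × ℝ) =>
                B₁.indicator (1 : ℝ × ℝ → ℝ≥0∞) ((z.1.1 : ℝ) + q₁ * x.1, (z.1.2 : ℝ) + q₁ * x.2) *
                B₂.indicator (1 : ℝ × ℝ → ℝ≥0∞) ((z.2.1 : ℝ) + q₂ * x.1, (z.2.2 : ℝ) + q₂ * x.2))
              (fun z _ => ((hindmeas B₁ hB₁m q₁ z.1).mul (hindmeas B₂ hB₂m q₂ z.2)))
    rw [step1]
    calc (∑ z ∈ F₁ ×ˢ F₂, I z) ≤ ∑' z : (ℤ × ℤ) × (ℤ × ℤ), I z := ENNReal.sum_le_tsum _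
      _ = ∑' w : (ℤ × ℤ) × (ℤ × ℤ), I (E w) := (Equiv.tsum_eq E I).symm
      _ = ∑' k : ℤ × ℤ, ∑' s : ℤ × ℤ, I (E (k, s)) := ENNReal.tsum_prod'
      _ = ∑ k ∈ hSfin.toFinset, ∑' s : ℤ × ℤ, I (E (k, s)) :=
          tsum_eq_sum (fun k hk => hTzero k (by simpa using hk))
      _ ≤ ∑ k ∈ hSfin.toFinset, m := Finset.sum_le_sum fun k _ => hTle k
      _ = (hSfin.toFinset.card : ℝ≥0∞) * m := by
          rw [Finset.sum_const, nsmul_eq_mul]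
      _ = (Nat.card ↥S : ℝ≥0∞) * m := by
          congr 2
          rw [Nat.card_coe_set_eq, ← Set.ncard_coe_finset hSfin.toFinset,
            Set.Finite.coe_toFinset]
  -- pass to the Bochner integral
  have hnonneg : (0 : ℝ × ℝ → ℝ) ≤ᵐ[volume.restrict Q] fun x =>
      (Nat.card {p : ℤ × ℤ // ((p.1 : ℝ) + q₁ * x.1, (p.2 : ℝ) + q₁ * x.2) ∈ B₁} : ℝ) *
      (Nat.card {p : ℤ × ℤ // ((p.1 : ℝ) + q₂ * x.1, (p.2 : ℝ) + q₂ * x.2) ∈ B₂} : ℝ) :=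
    Filter.Eventually.of_forall fun x => by positivity
  set freal : ℝ × ℝ → ℝ := fun x =>
    (∑ p ∈ F₁, B₁.indicator (1 : ℝ × ℝ → ℝ) ((p.1 : ℝ) + q₁ * x.1, (p.2 : ℝ) + q₁ * x.2)) *
    (∑ p ∈ F₂, B₂.indicator (1 : ℝ × ℝ → ℝ) ((p.1 : ℝ) + q₂ * x.1, (p.2 : ℝ) + q₂ * x.2))
    with hfrealdef
  have hfrealmeas : Measurable freal := by
    apply Measurable.mul
    · apply Finset.measurable_sum
      intro p _
      exact (measurable_const.indicator hB₁m).comp (by fun_prop)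
    · apply Finset.measurable_sum
      intro p _
      exact (measurable_const.indicator hB₂m).comp (by fun_prop)
  have hfeq : ∀ x ∈ Q,
      (Nat.card {p : ℤ × ℤ // ((p.1 : ℝ) + q₁ * x.1, (p.2 : ℝ) + q₁ * x.2) ∈ B₁} : ℝ) *
      (Nat.card {p : ℤ × ℤ // ((p.1 : ℝ) + q₂ * x.1, (p.2 : ℝ) + q₂ * x.2) ∈ B₂} : ℝ)
      = freal x := by
    intro x hx
    rw [hcard₁ x hx, hcard₂ x hx]
    simp only [hfrealdef]
    rw [sum_boole_indicator F₁ B₁ (fun p : ℤ × ℤ => ((p.1 : ℝ) + q₁ * x.1, (p.2 : ℝ) + q₁ * x.2)),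
      sum_boole_indicator F₂ B₂ (fun p : ℤ × ℤ => ((p.1 : ℝ) + q₂ * x.1, (p.2 : ℝ) + q₂ * x.2))]
  have hae : (fun x =>
      (Nat.card {p : ℤ × ℤ // ((p.1 : ℝ) + q₁ * x.1, (p.2 : ℝ) + q₁ * x.2) ∈ B₁} : ℝ) *
      (Nat.card {p : ℤ × ℤ // ((p.1 : ℝ) + q₂ * x.1, (p.2 : ℝ) + q₂ * x.2) ∈ B₂} : ℝ))
      =ᵐ[volume.restrict Q] freal :=
    Filter.eventually_of_mem (self_mem_ae_restrict hQmeas) hfeq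
  have hmf : AEStronglyMeasurable (fun x =>
      (Nat.card {p : ℤ × ℤ // ((p.1 : ℝ) + q₁ * x.1, (p.2 : ℝ) + q₁ * x.2) ∈ B₁} : ℝ) *
      (Nat.card {p : ℤ × ℤ // ((p.1 : ℝ) + q₂ * x.1, (p.2 : ℝ) + q₂ * x.2) ∈ B₂} : ℝ))
      (volume.restrict Q) :=
    hfrealmeas.aestronglyMeasurable.congr hae.symm
  rw [integral_eq_lintegral_of_nonneg_ae hnonneg hmf]
  have hGeq : (∫⁻ x in Q, ENNReal.ofReal (
      (Nat.card {p : ℤ × ℤ // ((p.1 : ℝ) + q₁ * x.1, (p.2 : ℝ) + q₁ * x.2) ∈ B₁} : ℝ) *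
      (Nat.card {p : ℤ × ℤ // ((p.1 : ℝ) + q₂ * x.1, (p.2 : ℝ) + q₂ * x.2) ∈ B₂} : ℝ)))
      = ∫⁻ x in Q, G₁ x * G₂ x := by
    apply lintegral_congr_ae
    apply Filter.eventually_of_mem (self_mem_ae_restrict hQmeas)
    intro x hx
    beta_reduce
    rw [ENNReal.ofReal_mul (Nat.cast_nonneg _), ENNReal.ofReal_natCast, ENNReal.ofReal_natCast,
      hcard₁ x hx, hcard₂ x hx]
    simp only [hG₁def, hG₂def]
    rw [sum_boole_indicator F₁ B₁
        (fun p : ℤ × ℤ => ((p.1 : ℝ) + q₁ * x.1, (p.2 : ℝ) + q₁ * x.2)) (M := ℝ≥0∞),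
      sum_boole_indicator F₂ B₂
        (fun p : ℤ × ℤ => ((p.1 : ℝ) + q₂ * x.1, (p.2 : ℝ) + q₂ * x.2)) (M := ℝ≥0∞)]
  rw [hGeq]
  -- finiteness for toReal monotonicity
  have hm1top : volume B₁ / (q₁ : ℝ≥0∞) ^ 2 ≠ ⊤ := by
    apply ne_of_lt
    apply ENNReal.div_lt_top (ne_of_lt hB₁b.measure_lt_top)
    simp [pow_eq_zero_iff, hq₁.ne']
  have hm2top : volume B₂ / (q₂ : ℝ≥0∞) ^ 2 ≠ ⊤ := by
    apply ne_of_lt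
    apply ENNReal.div_lt_top (ne_of_lt hB₂b.measure_lt_top)
    simp [pow_eq_zero_iff, hq₂.ne']
  have hmtop : m ≠ ⊤ := ne_top_of_le_ne_top hm1top (min_le_left _ _)
  have hfin : (Nat.card ↥S : ℝ≥0∞) * m ≠ ⊤ :=
    ENNReal.mul_ne_top (ENNReal.natCast_ne_top _) hmtop
  have hrfl : (Nat.card {k : ℤ × ℤ //
      ∃ u ∈ B₁, ∃ v ∈ B₂, ((k.1 : ℝ), (k.2 : ℝ)) = (q₂ : ℝ) • u - (q₁ : ℝ) • v} : ℝ)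
      = (Nat.card ↥S : ℝ) := rfl
  rw [hrfl]
  calc (∫⁻ x in Q, G₁ x * G₂ x).toReal
      ≤ ((Nat.card ↥S : ℝ≥0∞) * m).toReal := ENNReal.toReal_mono hfin hchain
    _ = (Nat.card ↥S : ℝ) *
        min ((volume B₁).toReal / q₁ ^ 2) ((volume B₂).toReal / q₂ ^ 2) := by
        rw [ENNReal.toReal_mul, ENNReal.toReal_natCast, hmdef,
          ENNReal.toReal_min hm1top hm2top, ENNReal.toReal_div, ENNReal.toReal_div]
        norm_num
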